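/- For n ≥ 1 let P_n(x,y) = Σ_{α ∈ S_n} x^{c(α)} y^{m(α)}, where c(α) is the number of cycles of α and m(α) its number of left-to-right maxima, let P_0 = 1, and let I_n(x,y) be the same sum restricted to indecomposable permutations of S_n. Then, as formal power series in z with coefficients in ℤ[x,y], (Σ_{n≥0} P_n(x,y) z^n) · (1 − Σ_{n≥1} I_n(x,y) z^n) = 1; equivalently, the number of permutations of S_n with p cycles and q left-to-right maxima is the coefficient of z^n x^p y^q in 1/(1 − Σ_{n≥1} I_n(x,y) z^n). -/

import Mathlib

/-- A permutation of `{0,...,n-1}` is indecomposable if it fixes no proper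
initial segment `{0,...,p-1}` (for `1 ≤ p < n`) setwise. -/
def Indecomposable {n : ℕ} (α : Equiv.Perm (Fin n)) : Prop :=
  ∀ p : ℕ, 1 ≤ p → p < n → ∃ i : Fin n, (i : ℕ) < p ∧ p ≤ ((α i : ℕ))

/-- The number of cycles (orbits) of a permutation: nontrivial cycles together
with fixed points, the latter counting as cycles of length 1. -/
noncomputable def cycleCount {n : ℕ} (α : Equiv.Perm (Fin n)) : ℕ :=
  α.cycleType.card + Nat.card {x : Fin n // α x = x}

/-- The number of left-to-right maxima of a permutation. -/
noncomputable def lrMaxCount {n : ℕ} (α : Equiv.Perm (Fin n)) : ℕ :=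
  Nat.card {i : Fin n // ∀ j : Fin n, j < i → α j < α i}

/-- `P n = ∑_{α ∈ Sₙ} x^{c(α)} y^{m(α)}`, with `x = X true`, `y = X false`;
note that `P 0 = 1`. -/
noncomputable def Ppoly (n : ℕ) : MvPolynomial Bool ℤ :=
  ∑ α : Equiv.Perm (Fin n),
    MvPolynomial.X true ^ cycleCount α * MvPolynomial.X false ^ lrMaxCount α

open scoped Classical in
/-- `I n`: the same sum restricted to indecomposable permutations of `Sₙ`. -/
noncomputable def Ipoly (n : ℕ) : MvPolynomial Bool ℤ :=
  ∑ α : Equiv.Perm (Fin n),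
    if Indecomposable α then
      MvPolynomial.X true ^ cycleCount α * MvPolynomial.X false ^ lrMaxCount α
    else 0

section Aux
open Equiv Finset

section
variable {p q : ℕ}

def eL (p q : ℕ) : Fin p ≃ {i : Fin (p + q) // (i : ℕ) < p} where
  toFun j := ⟨Fin.castAdd q j, by simpa using j.isLt⟩
  invFun i := ⟨(i : Fin (p+q)), i.2⟩
  left_inv j := by ext; simp
  right_inv i := by ext; simp

def eR (p q : ℕ) : Fin q ≃ {i : Fin (p + q) // ¬ (i : ℕ) < p} where
  toFun j := ⟨Fin.natAdd p j, by simp⟩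
  invFun i := ⟨((i : Fin (p+q)) : ℕ) - p, by have := (i : Fin (p+q)).isLt; have := i.2; omega⟩
  left_inv j := by ext; simp
  right_inv i := by have h2 := i.2; ext; simp; omega

noncomputable def pjoin (a : Perm (Fin p)) (b : Perm (Fin q)) : Perm (Fin (p + q)) :=
  have : DecidablePred fun i : Fin (p+q) => (i:ℕ) < p := fun _ => Nat.decLt _ _
  have : DecidablePred fun i : Fin (p+q) => ¬ (i:ℕ) < p := fun _ => instDecidableNot
  a.extendDomain (eL p q) * b.extendDomain (eR p q)

lemma pjoin_apply_lt (a : Perm (Fin p)) (b : Perm (Fin q)) (i : Fin (p+q))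
    (h : (i : ℕ) < p) : ((pjoin a b i : Fin (p+q)) : ℕ) = a ⟨i, h⟩ := by
  classical
  show ((a.extendDomain (eL p q)) ((b.extendDomain (eR p q)) i) : ℕ) = _
  rw [Perm.extendDomain_apply_not_subtype b (eR p q) (by simpa using h),
    Perm.extendDomain_apply_subtype a (eL p q) h]
  simp [eL]

lemma pjoin_apply_ge (a : Perm (Fin p)) (b : Perm (Fin q)) (i : Fin (p+q))
    (h : ¬ (i : ℕ) < p) : ((pjoin a b i : Fin (p+q)) : ℕ) = p + b ⟨(i : ℕ) - p, by have := i.isLt; omega⟩ := by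
  classical
  show ((a.extendDomain (eL p q)) ((b.extendDomain (eR p q)) i) : ℕ) = _
  rw [Perm.extendDomain_apply_subtype b (eR p q) h]
  rw [Perm.extendDomain_apply_not_subtype a (eL p q) (by simp [eR])]
  simp [eR]

end

lemma natCard_subtype {n : ℕ} (P : Fin n → Prop) [DecidablePred P] :
    Nat.card {x : Fin n // P x} = ∑ i : Fin n, if P i then 1 else 0 := by
  rw [Nat.card_eq_fintype_card, Fintype.card_subtype, Finset.card_filter]

section
variable {p q : ℕ} (a : Perm (Fin p)) (b : Perm (Fin q))

lemma pjoin_castAdd (i : Fin p) : ((pjoin a b (Fin.castAdd q i) : Fin (p+q)) : ℕ) = a i := by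
  rw [pjoin_apply_lt a b _ (by simpa using i.isLt)]
  congr 1

lemma pjoin_natAdd (i : Fin q) : ((pjoin a b (Fin.natAdd p i) : Fin (p+q)) : ℕ) = p + b i := by
  rw [pjoin_apply_ge a b _ (by simp)]
  congr 2; ext; simp

lemma cycleCount_pjoin : cycleCount (pjoin a b) = cycleCount a + cycleCount b := by
  classical
  have hdisj : (a.extendDomain (eL p q)).Disjoint (b.extendDomain (eR p q)) := by
    intro x
    by_cases h : (x : ℕ) < p
    · right; exact Perm.extendDomain_apply_not_subtype b (eR p q) (by simpa using h)
    · left; exact Perm.extendDomain_apply_not_subtype a (eL p q) h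
  have h1 : (pjoin a b).cycleType.card = a.cycleType.card + b.cycleType.card := by
    show ((a.extendDomain (eL p q)) * (b.extendDomain (eR p q))).cycleType.card = _
    rw [hdisj.cycleType_mul, Multiset.card_add,
      Equiv.Perm.cycleType_extendDomain, Equiv.Perm.cycleType_extendDomain]
  have h2 : Nat.card {x : Fin (p+q) // pjoin a b x = x}
      = Nat.card {x : Fin p // a x = x} + Nat.card {x : Fin q // b x = x} := by
    rw [natCard_subtype, natCard_subtype, natCard_subtype, Fin.sum_univ_add]
    congr 1
    · refine Finset.sum_congr rfl fun i _ => ?_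
      have hiff : (pjoin a b (Fin.castAdd q i) = Fin.castAdd q i) ↔ (a i = i) := by
        rw [Fin.ext_iff, Fin.ext_iff, pjoin_castAdd a b i]
        simp
      simp only [hiff]
    · refine Finset.sum_congr rfl fun i _ => ?_
      have hiff : (pjoin a b (Fin.natAdd p i) = Fin.natAdd p i) ↔ (b i = i) := by
        rw [Fin.ext_iff, Fin.ext_iff, pjoin_natAdd a b i]
        simp
      simp only [hiff]
  unfold cycleCount
  omega

lemma lrMaxCount_pjoin : lrMaxCount (pjoin a b) = lrMaxCount a + lrMaxCount b := by
  classical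
  unfold lrMaxCount
  rw [natCard_subtype, natCard_subtype, natCard_subtype, Fin.sum_univ_add]
  congr 1
  · refine Finset.sum_congr rfl fun i _ => ?_
    have hiff : (∀ j : Fin (p+q), j < Fin.castAdd q i → pjoin a b j < pjoin a b (Fin.castAdd q i))
        ↔ (∀ j : Fin p, j < i → a j < a i) := by
      constructor
      · intro H j hj
        have := H (Fin.castAdd q j) (by simp only [Fin.lt_def, Fin.coe_castAdd]; exact hj)
        rw [Fin.lt_def, pjoin_castAdd, pjoin_castAdd] at this
        exact this
      · intro H j hj
        rw [Fin.lt_def, Fin.coe_castAdd] at hj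
        have hjp : (j : ℕ) < p := lt_trans hj i.isLt
        rw [Fin.lt_def, pjoin_apply_lt a b j hjp, pjoin_castAdd]
        exact H ⟨j, hjp⟩ hj
    simp only [hiff]
  · refine Finset.sum_congr rfl fun i _ => ?_
    have hiff : (∀ j : Fin (p+q), j < Fin.natAdd p i → pjoin a b j < pjoin a b (Fin.natAdd p i))
        ↔ (∀ j : Fin q, j < i → b j < b i) := by
      constructor
      · intro H j hj
        have := H (Fin.natAdd p j)
          (by simp only [Fin.lt_def, Fin.coe_natAdd]; exact Nat.add_lt_add_left hj p)
        rw [Fin.lt_def, pjoin_natAdd, pjoin_natAdd] at this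
        exact Fin.lt_def.mpr (by omega)
      · intro H j hj
        rw [Fin.lt_def, Fin.coe_natAdd] at hj
        rw [Fin.lt_def, pjoin_natAdd]
        by_cases hjp : (j : ℕ) < p
        · rw [pjoin_apply_lt a b j hjp]
          have := (a ⟨j, hjp⟩).isLt
          omega
        · rw [pjoin_apply_ge a b j hjp]
          have hlt : (⟨(j:ℕ) - p, by have := j.isLt; omega⟩ : Fin q) < i := by
            rw [Fin.lt_def]; simp only []; omega
          have := H _ hlt
          rw [Fin.lt_def] at this
          omega
    simp only [hiff]

end
def Invariant {n : ℕ} (k : ℕ) (α : Perm (Fin n)) : Prop :=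
  ∀ i : Fin n, (i : ℕ) < k → ((α i : Fin n) : ℕ) < k

lemma indec_iff {n : ℕ} (α : Perm (Fin n)) :
    Indecomposable α ↔ ∀ k, 1 ≤ k → k < n → ¬ Invariant k α := by
  unfold Indecomposable Invariant
  push_neg
  simp only [not_lt]

noncomputable def fb {n : ℕ} (α : Perm (Fin n)) : ℕ :=
  sInf {k | 1 ≤ k ∧ Invariant k α}

lemma fb_mem {n : ℕ} (hn : 1 ≤ n) (α : Perm (Fin n)) :
    1 ≤ fb α ∧ Invariant (fb α) α := by
  have : n ∈ {k | 1 ≤ k ∧ Invariant k α} := ⟨hn, fun i _ => (α i).isLt⟩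
  exact Nat.sInf_mem (⟨n, this⟩ : Set.Nonempty _)

lemma fb_le {n : ℕ} (hn : 1 ≤ n) (α : Perm (Fin n)) : fb α ≤ n := by
  have : n ∈ {k | 1 ≤ k ∧ Invariant k α} := ⟨hn, fun i _ => (α i).isLt⟩
  exact Nat.sInf_le this

lemma fb_min {n : ℕ} {α : Perm (Fin n)} {k : ℕ} (h1 : 1 ≤ k) (h2 : Invariant k α) :
    fb α ≤ k := Nat.sInf_le (⟨h1, h2⟩ : k ∈ {k | 1 ≤ k ∧ Invariant k α})

section
variable {p q : ℕ}

lemma invariant_pjoin_iff (a : Perm (Fin p)) (b : Perm (Fin q)) {k : ℕ} (hk : k ≤ p) :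
    Invariant k (pjoin a b) ↔ Invariant k a := by
  constructor
  · intro H i hi
    have := H (Fin.castAdd q i) (by simpa using hi)
    rwa [pjoin_castAdd] at this
  · intro H i hi
    have hip : (i : ℕ) < p := lt_of_lt_of_le hi hk
    rw [pjoin_apply_lt a b i hip]
    exact H ⟨i, hip⟩ hi

lemma invariant_pjoin (a : Perm (Fin p)) (b : Perm (Fin q)) : Invariant p (pjoin a b) :=
  (invariant_pjoin_iff a b le_rfl).mpr (fun i _ => (a i).isLt)

lemma fb_pjoin (hp : 1 ≤ p) {a : Perm (Fin p)} (ha : Indecomposable a) (b : Perm (Fin q)) :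
    fb (pjoin a b) = p := by
  have hle : fb (pjoin a b) ≤ p := fb_min hp (invariant_pjoin a b)
  have hmem := fb_mem (by omega) (pjoin a b)
  rcases Nat.lt_or_ge (fb (pjoin a b)) p with h | h
  · exfalso
    have hinv : Invariant (fb (pjoin a b)) a :=
      (invariant_pjoin_iff a b h.le).mp hmem.2
    exact (indec_iff a).mp ha _ hmem.1 h hinv
  · omega

def SplitOK (α : Perm (Fin (p + q))) : Prop :=
  ∀ x : Fin (p + q), (x : ℕ) < p ↔ ((α x : Fin (p+q)) : ℕ) < p

lemma splitOK_of_invariant {α : Perm (Fin (p + q))} (h : Invariant p α) : SplitOK α := by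
  intro x
  refine ⟨h x, fun hx => ?_⟩
  by_contra hxp
  -- α maps {i < p} into itself injectively, hence onto
  classical
  have hsurj : ∀ y : {i : Fin (p+q) // (i : ℕ) < p}, ∃ z : {i : Fin (p+q) // (i : ℕ) < p},
      α z = y := by
    have : Function.Injective (fun z : {i : Fin (p+q) // (i : ℕ) < p} =>
        (⟨α z, h z z.2⟩ : {i : Fin (p+q) // (i : ℕ) < p})) := by
      intro u v huv
      simp only [Subtype.mk.injEq, EmbeddingLike.apply_eq_iff_eq] at huv
      exact Subtype.ext huv
    have hs := Finite.injective_iff_surjective.mp this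
    intro y
    obtain ⟨z, hz⟩ := hs y
    exact ⟨z, by simpa [Subtype.ext_iff] using hz⟩
  obtain ⟨z, hz⟩ := hsurj ⟨α x, hx⟩
  have : z = x := α.injective hz
  exact hxp (this ▸ z.2)

open scoped Classical in
noncomputable def splitA (α : Perm (Fin (p + q))) : Perm (Fin p) :=
  if h : SplitOK α then (eL p q).symm.permCongr (α.subtypePerm (fun x => (h x).symm)) else 1

open scoped Classical in
noncomputable def splitB (α : Perm (Fin (p + q))) : Perm (Fin q) :=
  if h : SplitOK α then
    (eR p q).symm.permCongr (α.subtypePerm (fun x => not_congr (h x).symm))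
  else 1

lemma splitA_apply {α : Perm (Fin (p + q))} (h : SplitOK α) (j : Fin p) :
    ((splitA α j : Fin p) : ℕ) = ((α (Fin.castAdd q j) : Fin (p+q)) : ℕ) := by
  rw [splitA, dif_pos h]
  simp [Equiv.permCongr_apply, eL, Equiv.Perm.subtypePerm]

lemma splitB_apply {α : Perm (Fin (p + q))} (h : SplitOK α) (j : Fin q) :
    ((splitB α j : Fin q) : ℕ) = ((α (Fin.natAdd p j) : Fin (p+q)) : ℕ) - p := by
  rw [splitB, dif_pos h]
  simp [Equiv.permCongr_apply, eR, Equiv.Perm.subtypePerm]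

lemma pjoin_split {α : Perm (Fin (p + q))} (h : SplitOK α) :
    pjoin (splitA α) (splitB α) = α := by
  ext i
  by_cases hi : (i : ℕ) < p
  · rw [pjoin_apply_lt _ _ i hi, splitA_apply h]
    congr 1
  · rw [pjoin_apply_ge _ _ i hi, splitB_apply h]
    have hni : Fin.natAdd p (⟨(i:ℕ) - p, by have := i.isLt; omega⟩ : Fin q) = i := by
      ext; simp; omega
    rw [hni]
    have : ¬ ((α i : Fin (p+q)) : ℕ) < p := fun hc => hi ((h i).mpr hc)
    omega

lemma pjoin_inj {a a' : Perm (Fin p)} {b b' : Perm (Fin q)}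
    (h : pjoin a b = pjoin a' b') : a = a' ∧ b = b' := by
  constructor
  · ext j
    have := congrArg (fun σ : Perm (Fin (p+q)) => ((σ (Fin.castAdd q j) : Fin (p+q)) : ℕ)) h
    simpa [pjoin_castAdd] using this
  · ext j
    have := congrArg (fun σ : Perm (Fin (p+q)) => ((σ (Fin.natAdd p j) : Fin (p+q)) : ℕ)) h
    simp only [pjoin_natAdd] at this
    omega

lemma indec_splitA {α : Perm (Fin (p + q))} (h : SplitOK α)
    (hmin : ∀ k, 1 ≤ k → k < p → ¬ Invariant k α) : Indecomposable (splitA α) := by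
  rw [indec_iff]
  intro k hk1 hkp hinv
  have hinvα : Invariant k α := by
    rw [← pjoin_split h]
    exact (invariant_pjoin_iff _ _ hkp.le).mpr hinv
  exact hmin k hk1 hkp hinvα

end

noncomputable def wgt {n : ℕ} (α : Perm (Fin n)) : MvPolynomial Bool ℤ :=
  MvPolynomial.X true ^ cycleCount α * MvPolynomial.X false ^ lrMaxCount α

lemma Ppoly_eq (n : ℕ) : Ppoly n = ∑ α : Perm (Fin n), wgt α := rfl

open scoped Classical in
lemma Ipoly_eq (n : ℕ) :
    Ipoly n = ∑ α : Perm (Fin n), if Indecomposable α then wgt α else 0 := rfl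

lemma wgt_pjoin {p q : ℕ} (a : Perm (Fin p)) (b : Perm (Fin q)) :
    wgt (pjoin a b) = wgt a * wgt b := by
  unfold wgt
  rw [cycleCount_pjoin, lrMaxCount_pjoin, pow_add, pow_add]
  ring

lemma core (n p q : ℕ) (hn : n = p + q) (hp : 1 ≤ p) :
    ∑ α ∈ Finset.univ.filter (fun α : Perm (Fin n) => fb α = p), wgt α
      = Ipoly p * Ppoly q := by
  classical
  subst hn
  have hrhs : Ipoly p * Ppoly q
      = ∑ ab ∈ (Finset.univ.filter fun a : Perm (Fin p) => Indecomposable a) ×ˢ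
          (Finset.univ : Finset (Perm (Fin q))), wgt ab.1 * wgt ab.2 := by
    rw [Finset.sum_product, Finset.sum_filter, Ipoly_eq, Ppoly_eq, Finset.sum_mul_sum]
    refine Finset.sum_congr rfl fun a _ => ?_
    split_ifs with h
    · rfl
    · simp
  rw [hrhs]
  have hOK : ∀ α ∈ Finset.univ.filter (fun α : Perm (Fin (p+q)) => fb α = p),
      SplitOK α := by
    intro α hα
    rw [Finset.mem_filter] at hα
    have hinv : Invariant p α := by
      have h2 := (fb_mem (n := p + q) (by omega) α).2
      rwa [hα.2] at h2
    exact splitOK_of_invariant hinv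
  refine Finset.sum_nbij' (i := fun α => (splitA α, splitB α))
    (j := fun ab => pjoin ab.1 ab.2) ?_ ?_ ?_ ?_ ?_
  · intro α hα
    rw [Finset.mem_product, Finset.mem_filter]
    refine ⟨⟨Finset.mem_univ _, ?_⟩, Finset.mem_univ _⟩
    refine indec_splitA (hOK α hα) fun k hk1 hkp hinv => ?_
    rw [Finset.mem_filter] at hα
    have := fb_min hk1 hinv
    omega
  · intro ab hab
    rw [Finset.mem_product, Finset.mem_filter] at hab
    rw [Finset.mem_filter]
    exact ⟨Finset.mem_univ _, fb_pjoin hp hab.1.2 ab.2⟩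
  · intro α hα
    exact pjoin_split (hOK α hα)
  · intro ab _
    have h := pjoin_split (splitOK_of_invariant (invariant_pjoin ab.1 ab.2))
    have h2 := pjoin_inj h
    rw [Prod.ext_iff]
    exact ⟨h2.1, h2.2⟩
  · intro α hα
    conv_lhs => rw [← pjoin_split (hOK α hα)]
    exact wgt_pjoin _ _

lemma Ppoly_rec (n : ℕ) (hn : 1 ≤ n) :
    Ppoly n = ∑ p ∈ Finset.Icc 1 n, Ipoly p * Ppoly (n - p) := by
  classical
  rw [Ppoly_eq]
  rw [← Finset.sum_fiberwise_of_maps_to (g := fb) (t := Finset.Icc 1 n)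
    (fun α _ => Finset.mem_Icc.mpr ⟨(fb_mem hn α).1, fb_le hn α⟩) wgt]
  refine Finset.sum_congr rfl fun p hp => ?_
  rw [Finset.mem_Icc] at hp
  exact core n p (n - p) (by omega) hp.1

lemma Ppoly_zero : Ppoly 0 = 1 := by
  classical
  have hw : ∀ α : Perm (Fin 0), wgt α = 1 := by
    intro α
    have h1 : cycleCount α = 0 := by
      unfold cycleCount
      have hα : α = 1 := Subsingleton.elim _ _
      rw [hα, Equiv.Perm.cycleType_one]
      simp
    have h2 : lrMaxCount α = 0 := by
      unfold lrMaxCount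
      simp
    simp [wgt, h1, h2]
  rw [Ppoly_eq]
  rw [Finset.sum_congr rfl fun α _ => hw α]
  simp


end Aux

theorem perm_generating_series :
    (PowerSeries.mk fun n => Ppoly n) *
      (1 - PowerSeries.mk fun n => if n = 0 then 0 else Ipoly n) = 1 := by
  classical
  refine PowerSeries.ext fun n => ?_
  rw [PowerSeries.coeff_mul]
  simp only [map_sub, PowerSeries.coeff_mk, PowerSeries.coeff_one]
  rcases n with _ | m
  · simp [Ppoly_zero]
  · set n := m + 1 with hn
    rw [if_neg (Nat.succ_ne_zero m)]
    rw [Finset.Nat.sum_antidiagonal_eq_sum_range_succ_mk, Finset.sum_range_succ]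
    have hterm : ∀ k ∈ Finset.range n,
        Ppoly k * ((if n - k = 0 then (1 : MvPolynomial Bool ℤ) else 0) -
          if n - k = 0 then 0 else Ipoly (n - k)) = -(Ppoly k * Ipoly (n - k)) := by
      intro k hk
      rw [Finset.mem_range] at hk
      rw [if_neg (by omega), if_neg (by omega)]
      ring
    rw [Finset.sum_congr rfl hterm, Nat.sub_self]
    simp only [if_pos rfl]
    have hrw : ∑ p ∈ Finset.Icc 1 n, Ipoly p * Ppoly (n - p)
        = ∑ k ∈ Finset.range n, Ppoly k * Ipoly (n - k) := by
      refine Finset.sum_nbij' (i := fun p => n - p) (j := fun k => n - k) ?_ ?_ ?_ ?_ ?_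
      · intro p hp; rw [Finset.mem_Icc] at hp; rw [Finset.mem_range]; omega
      · intro k hk; rw [Finset.mem_range] at hk; rw [Finset.mem_Icc]; omega
      · intro p hp; rw [Finset.mem_Icc] at hp; omega
      · intro k hk; rw [Finset.mem_range] at hk; omega
      · intro p hp
        rw [Finset.mem_Icc] at hp
        rw [Nat.sub_sub_self hp.2, mul_comm]
    have hP := Ppoly_rec n (by omega)
    rw [hrw] at hP
    rw [Finset.sum_neg_distrib]
    rw [← hP]
    simp only [if_true, if_pos]
    ring
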